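/- Let $f_1,\dots,f_n : \mathbb{R}^d \to \mathbb{R}$ be convex and $L$-smooth with $x_\ast$ a minimizer of $f = \frac{1}{n}\sum_i f_i$. Fix a permutation $\pi$, stepsize $\gamma > 0$, and iterates $x^0 = x$, $x^{i+1} = x^i - \gamma\nabla f_{\pi_i}(x^i)$, $x^+ = x^n$. Then for each $0 \le k \le n-1$: $\|x^k - x^+\|^2 \le 4\gamma^2 L n \sum_{i=0}^{n-1} D_{f_{\pi_i}}(x_\ast, x^i) + 2\gamma^2\big\|\sum_{i=k}^{n-1}\nabla f_{\pi_i}(x_\ast)\big\|^2$. -/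

import Mathlib

open Set Finset
local notation "⟪" a ", " b "⟫" => @inner ℝ _ _ a b

variable {E : Type*} [NormedAddCommGroup E] [InnerProductSpace ℝ E] [CompleteSpace E]

lemma line_hasDerivAt {h : E → ℝ} (hd : Differentiable ℝ h) (x v : E) (t : ℝ) :
    HasDerivAt (fun s : ℝ => h (x + s • v)) ⟪gradient h (x + t • v), v⟫ t := by
  have hc : HasDerivAt (fun s : ℝ => x + s • v) v t := by
    simpa using ((hasDerivAt_id t).smul_const v).const_add x
  have hg : HasFDerivAt h (InnerProductSpace.toDual ℝ E (gradient h (x + t • v))) (x + t • v) :=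
    (hd _).hasGradientAt
  simpa [InnerProductSpace.toDual_apply_apply, Function.comp_def] using hg.comp_hasDerivAt t hc

lemma first_order {h : E → ℝ} (hd : Differentiable ℝ h) (hc : ConvexOn ℝ Set.univ h)
    (x y : E) : ⟪gradient h y, x - y⟫ ≤ h x - h y := by
  set g : ℝ → ℝ := fun s => h (y + s • (x - y)) with hgdef
  have hder : HasDerivAt g ⟪gradient h y, x - y⟫ 0 := by
    have := line_hasDerivAt hd y (x - y) 0
    simpa using this
  have htend := hasDerivAt_iff_tendsto_slope.1 hder
  have htend' : Filter.Tendsto (slope g 0) (nhdsWithin 0 (Set.Ioi 0)) (nhds ⟪gradient h y, x - y⟫) :=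
    htend.mono_left (nhdsWithin_mono _ (fun t ht => ne_of_gt ht))
  refine le_of_tendsto htend' ?_
  filter_upwards [Ioc_mem_nhdsGT_of_mem (Set.left_mem_Ico.2 one_pos)] with t ht
  have ht0 : 0 < t := ht.1
  have ht1 : t ≤ 1 := ht.2
  have hconv := hc.2 (Set.mem_univ y) (Set.mem_univ x) (by linarith : (0:ℝ) ≤ 1 - t)
    (le_of_lt ht0) (by ring)
  have hpt : y + t • (x - y) = (1 - t) • y + t • x := by
    rw [smul_sub, sub_smul, one_smul]; abel
  have hgt : g t ≤ (1 - t) * h y + t * h x := by rw [hgdef]; simp only; rw [hpt]; exact hconv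
  have hg0 : g 0 = h y := by simp [hgdef]
  rw [slope_def_field]
  have : (g t - g 0) / (t - 0) ≤ h x - h y := by
    rw [hg0, sub_zero, div_le_iff₀ ht0]
    nlinarith
  simpa [div_eq_inv_mul] using this

lemma descent_lemma {h : E → ℝ} (hd : Differentiable ℝ h) {L : ℝ} (hL : 0 ≤ L)
    (hsm : ∀ a b, ‖gradient h a - gradient h b‖ ≤ L * ‖a - b‖) (x z : E) :
    h z ≤ h x + ⟪gradient h x, z - x⟫ + L / 2 * ‖z - x‖ ^ 2 := by
  set v : E := z - x with hv
  set ψ : ℝ → ℝ := fun t => h (x + t • v) - t * ⟪gradient h x, v⟫ - L * ‖v‖ ^ 2 * t ^ 2 / 2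
    with hψdef
  have hψder : ∀ t : ℝ, HasDerivAt ψ
      (⟪gradient h (x + t • v), v⟫ - ⟪gradient h x, v⟫ - L * ‖v‖ ^ 2 * t) t := by
    intro t
    have h1 := line_hasDerivAt hd x v t
    have h2 : HasDerivAt (fun s : ℝ => s * ⟪gradient h x, v⟫) ⟪gradient h x, v⟫ t := by
      simpa using (hasDerivAt_id t).mul_const ⟪gradient h x, v⟫
    have h3 : HasDerivAt (fun s : ℝ => L * ‖v‖ ^ 2 * s ^ 2 / 2) (L * ‖v‖ ^ 2 * t) t := by
      have := ((hasDerivAt_pow 2 t).const_mul (L * ‖v‖ ^ 2)).div_const 2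
      exact this.congr_deriv (by ring)
    exact (h1.sub h2).sub h3
  have hanti : AntitoneOn ψ (Set.Icc 0 1) := by
    apply antitoneOn_of_deriv_nonpos (convex_Icc 0 1)
    · exact Continuous.continuousOn (by
        have : Differentiable ℝ ψ := fun t => (hψder t).differentiableAt
        exact this.continuous)
    · intro t ht
      exact ((hψder t).differentiableAt).differentiableWithinAt
    · intro t ht
      rw [interior_Icc] at ht
      rw [(hψder t).deriv]
      have hb : ⟪gradient h (x + t • v) - gradient h x, v⟫ ≤ L * ‖v‖ ^ 2 * t := by
        calc ⟪gradient h (x + t • v) - gradient h x, v⟫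
            ≤ ‖gradient h (x + t • v) - gradient h x‖ * ‖v‖ := real_inner_le_norm _ _
          _ ≤ (L * ‖x + t • v - x‖) * ‖v‖ := by
              apply mul_le_mul_of_nonneg_right (hsm _ _) (norm_nonneg _)
          _ = L * ‖v‖ ^ 2 * t := by
              rw [add_sub_cancel_left, norm_smul, Real.norm_eq_abs,
                abs_of_pos ht.1]
              ring
      have := inner_sub_left (𝕜 := ℝ) (gradient h (x + t • v)) (gradient h x) v
      linarith [hb, this.symm.le, this.le]
  have key := hanti (Set.left_mem_Icc.2 zero_le_one) (Set.right_mem_Icc.2 zero_le_one)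
    zero_le_one
  have hψ1 : ψ 1 = h z - ⟪gradient h x, v⟫ - L * ‖v‖ ^ 2 / 2 := by
    simp [hψdef, hv]
  have hψ0 : ψ 0 = h x := by simp [hψdef]
  rw [hψ1, hψ0] at key
  linarith

lemma cocoercivity {h : E → ℝ} (hd : Differentiable ℝ h) (hc : ConvexOn ℝ Set.univ h)
    {L : ℝ} (hL : 0 < L) (hsm : ∀ a b, ‖gradient h a - gradient h b‖ ≤ L * ‖a - b‖)
    (x y : E) :
    ‖gradient h x - gradient h y‖ ^ 2 ≤ 2 * L * (h x - h y - ⟪gradient h y, x - y⟫) := by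
  set φ : E → ℝ := fun z => h z - ⟪gradient h y, z⟫ with hφdef
  have hgradφ : ∀ z, HasGradientAt φ (gradient h z - gradient h y) z := by
    intro z
    have h1 : HasFDerivAt h (InnerProductSpace.toDual ℝ E (gradient h z)) z :=
      (hd z).hasGradientAt
    have h2 : HasFDerivAt (fun w : E => ⟪gradient h y, w⟫)
        (InnerProductSpace.toDual ℝ E (gradient h y)) z := by
      have := (InnerProductSpace.toDual ℝ E (gradient h y)).hasFDerivAt (x := z)
      exact this
    have := h1.sub h2
    rw [← map_sub] at this
    exact this
  have hφgrad : ∀ z, gradient φ z = gradient h z - gradient h y :=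
    fun z => (hgradφ z).gradient
  have hφd : Differentiable ℝ φ := fun z => ((hgradφ z).differentiableAt)
  have hφc : ConvexOn ℝ Set.univ φ := by
    apply hc.sub
    refine ⟨convex_univ, fun a _ b _ p q hp hq hpq => ?_⟩
    simp only [inner_add_right, inner_smul_right]
    simp [smul_eq_mul]
  have hφsm : ∀ a b, ‖gradient φ a - gradient φ b‖ ≤ L * ‖a - b‖ := by
    intro a b
    rw [hφgrad, hφgrad]
    simpa using hsm a b
  have hmin : ∀ w, φ y ≤ φ w := by
    intro w
    have := first_order hφd hφc w y
    rw [hφgrad, sub_self, inner_zero_left] at this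
    linarith
  have hdesc := descent_lemma hφd hL.le hφsm x (x - L⁻¹ • gradient φ x)
  have hz : x - L⁻¹ • gradient φ x - x = -(L⁻¹ • gradient φ x) := by abel
  rw [hz] at hdesc
  have hinner : ⟪gradient φ x, -(L⁻¹ • gradient φ x)⟫ = -(L⁻¹ * ‖gradient φ x‖ ^ 2) := by
    rw [inner_neg_right, real_inner_smul_right, real_inner_self_eq_norm_sq]
  have hnorm : ‖-(L⁻¹ • gradient φ x)‖ ^ 2 = L⁻¹ ^ 2 * ‖gradient φ x‖ ^ 2 := by
    rw [norm_neg, norm_smul, mul_pow, Real.norm_eq_abs, sq_abs]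
  rw [hinner, hnorm] at hdesc
  have hkey : φ y ≤ φ x - ‖gradient φ x‖ ^ 2 / (2 * L) := by
    refine le_trans (hmin _) (le_trans hdesc (le_of_eq ?_))
    field_simp
    ring
  have hφx : φ x - φ y = h x - h y - ⟪gradient h y, x - y⟫ := by
    simp only [hφdef, inner_sub_right]
    ring
  have hφgx : gradient φ x = gradient h x - gradient h y := hφgrad x
  rw [hφgx] at hkey
  have h2L : 0 < 2 * L := by linarith
  have hkey' := (div_le_iff₀ h2L).1
    (by linarith : ‖gradient h x - gradient h y‖ ^ 2 / (2 * L) ≤ φ x - φ y)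
  rw [← hφx]
  linarith


set_option maxHeartbeats 1000000 in
/-- Forward per-epoch deviation bound for RR/SO with convex components (Lemma 2 core
inequality, deterministic per-permutation form). -/
theorem forward_deviation_bound_convex
    (d n : ℕ) (L γ : ℝ) (hL : 0 < L) (hγ : 0 < γ)
    (f : Fin n → EuclideanSpace ℝ (Fin d) → ℝ)
    (hd : ∀ i, Differentiable ℝ (f i))
    (hcvx : ∀ i, ConvexOn ℝ Set.univ (f i))
    (hsm : ∀ i x y, ‖gradient (f i) x - gradient (f i) y‖ ≤ L * ‖x - y‖)
    (xstar : EuclideanSpace ℝ (Fin d))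
    (hmin : ∀ y, (n : ℝ)⁻¹ * ∑ i, f i xstar ≤ (n : ℝ)⁻¹ * ∑ i, f i y)
    (π : Equiv.Perm (Fin n))
    (x : Fin (n + 1) → EuclideanSpace ℝ (Fin d))
    (hx : ∀ i : Fin n, x i.succ = x i.castSucc - γ • gradient (f (π i)) (x i.castSucc))
    (k : Fin n) :
    ‖x k.castSucc - x (Fin.last n)‖ ^ 2
      ≤ 4 * γ ^ 2 * L * n *
          ∑ i : Fin n, (f (π i) xstar - f (π i) (x i.castSucc)
            - (inner ℝ (gradient (f (π i)) (x i.castSucc)) (xstar - x i.castSucc) : ℝ))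
        + 2 * γ ^ 2 *
          ‖∑ i ∈ Finset.univ.filter (fun i : Fin n => (k : ℕ) ≤ (i : ℕ)),
              gradient (f (π i)) xstar‖ ^ 2 := by
  set g : Fin n → EuclideanSpace ℝ (Fin d) :=
    fun i => gradient (f (π i)) (x i.castSucc) with hg
  set gs : Fin n → EuclideanSpace ℝ (Fin d) := fun i => gradient (f (π i)) xstar with hgs
  set S : Finset (Fin n) := Finset.univ.filter (fun i : Fin n => (k : ℕ) ≤ (i : ℕ)) with hS
  have hx' : ∀ i : Fin n, x i.succ = x i.castSucc - γ • g i := hx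
  -- telescoping
  have htel : ∀ j : Fin (n + 1),
      x j = x 0 - γ • ∑ i ∈ Finset.univ.filter (fun i : Fin n => (i : ℕ) < (j : ℕ)), g i := by
    intro j
    induction j using Fin.induction with
    | zero => simp
    | succ i ih =>
      have hset : Finset.univ.filter (fun j : Fin n => (j : ℕ) < ((i.succ : Fin (n+1)) : ℕ))
          = insert i (Finset.univ.filter
              (fun j : Fin n => (j : ℕ) < ((i.castSucc : Fin (n+1)) : ℕ))) := by
        ext j
        simp only [Finset.mem_filter, Finset.mem_univ, true_and, Finset.mem_insert,
          Fin.val_succ, Fin.coe_castSucc, Fin.ext_iff]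
        omega
      rw [hx' i, ih, hset, Finset.sum_insert (by simp), smul_add]
      abel
  have hdiff : x k.castSucc - x (Fin.last n) = γ • ∑ i ∈ S, g i := by
    rw [htel k.castSucc, htel (Fin.last n)]
    have h1 : Finset.univ.filter (fun i : Fin n => (i : ℕ) < ((Fin.last n : Fin (n+1)) : ℕ))
        = Finset.univ := by
      ext i; simp [i.isLt]
    rw [h1]
    have h2 : ∑ i ∈ Finset.univ.filter
          (fun i : Fin n => (i : ℕ) < ((k.castSucc : Fin (n+1)) : ℕ)), g i
        + ∑ i ∈ S, g i = ∑ i, g i := by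
      rw [hS]
      have : (Finset.univ.filter (fun i : Fin n => (k : ℕ) ≤ (i : ℕ)))
          = Finset.univ.filter (fun i : Fin n => ¬ ((i : ℕ) < ((k.castSucc : Fin (n+1)) : ℕ))) := by
        ext i; simp [not_lt]
      rw [this]
      exact Finset.sum_filter_add_sum_filter_not _ _ _
    rw [← h2, smul_add]
    abel
  set a : EuclideanSpace ℝ (Fin d) := ∑ i ∈ S, (g i - gs i) with ha
  set b : EuclideanSpace ℝ (Fin d) := ∑ i ∈ S, gs i with hb
  have hsplit : ∑ i ∈ S, g i = a + b := by
    rw [ha, hb, ← Finset.sum_add_distrib]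
    exact Finset.sum_congr rfl (fun i _ => by abel)
  set SD : ℝ := ∑ i : Fin n, (f (π i) xstar - f (π i) (x i.castSucc)
      - ⟪gradient (f (π i)) (x i.castSucc), xstar - x i.castSucc⟫) with hSD
  -- per-term cocoercivity
  have hterm : ∀ i : Fin n, ‖g i - gs i‖ ^ 2
      ≤ 2 * L * (f (π i) xstar - f (π i) (x i.castSucc)
          - ⟪gradient (f (π i)) (x i.castSucc), xstar - x i.castSucc⟫) := by
    intro i
    have := cocoercivity (hd (π i)) (hcvx (π i)) hL (hsm (π i)) xstar (x i.castSucc)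
    rw [← norm_sub_rev (gs i) (g i)]
    exact this
  -- bound on ‖a‖²
  have hcard : (S.card : ℝ) ≤ (n : ℝ) := by
    have := Finset.card_le_univ S
    simp only [Finset.card_univ, Fintype.card_fin] at this
    exact_mod_cast this
  have hsumsq_nonneg : (0:ℝ) ≤ ∑ i ∈ S, ‖g i - gs i‖ ^ 2 :=
    Finset.sum_nonneg (fun i _ => sq_nonneg _)
  have hA : ‖a‖ ^ 2 ≤ (n : ℝ) * (2 * L * SD) := by
    calc ‖a‖ ^ 2 ≤ (∑ i ∈ S, ‖g i - gs i‖) ^ 2 := by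
          have hn := norm_sum_le S (fun i => g i - gs i)
          have h0 : (0:ℝ) ≤ ‖a‖ := norm_nonneg _
          nlinarith [hn]
      _ ≤ (S.card : ℝ) * ∑ i ∈ S, ‖g i - gs i‖ ^ 2 := by
          have := sq_sum_le_card_mul_sum_sq (s := S) (f := fun i => ‖g i - gs i‖)
          exact_mod_cast this
      _ ≤ (n : ℝ) * ∑ i ∈ S, ‖g i - gs i‖ ^ 2 :=
          mul_le_mul_of_nonneg_right hcard hsumsq_nonneg
      _ ≤ (n : ℝ) * ∑ i : Fin n, ‖g i - gs i‖ ^ 2 := by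
          apply mul_le_mul_of_nonneg_left _ (Nat.cast_nonneg n)
          exact Finset.sum_le_sum_of_subset_of_nonneg (Finset.subset_univ S)
            (fun i _ _ => sq_nonneg _)
      _ ≤ (n : ℝ) * (2 * L * SD) := by
          apply mul_le_mul_of_nonneg_left _ (Nat.cast_nonneg n)
          rw [hSD, Finset.mul_sum]
          exact Finset.sum_le_sum (fun i _ => hterm i)
  have hsq : ‖a + b‖ ^ 2 ≤ 2 * ‖a‖ ^ 2 + 2 * ‖b‖ ^ 2 := by
    nlinarith [norm_add_le a b, norm_nonneg a, norm_nonneg b, norm_nonneg (a + b), sq_nonneg (‖a‖ - ‖b‖)]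
  have hnorm : ‖x k.castSucc - x (Fin.last n)‖ ^ 2 = γ ^ 2 * ‖a + b‖ ^ 2 := by
    rw [hdiff, hsplit, norm_smul, Real.norm_eq_abs, mul_pow, sq_abs]
  rw [hnorm]
  have hb2 : ‖∑ i ∈ S, gs i‖ ^ 2 = ‖b‖ ^ 2 := by rw [hb]
  rw [hb2]
  calc γ ^ 2 * ‖a + b‖ ^ 2
      ≤ γ ^ 2 * (2 * ‖a‖ ^ 2 + 2 * ‖b‖ ^ 2) :=
        mul_le_mul_of_nonneg_left hsq (sq_nonneg γ)
    _ ≤ γ ^ 2 * (2 * ((n : ℝ) * (2 * L * SD)) + 2 * ‖b‖ ^ 2) := by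
        have h1 := mul_le_mul_of_nonneg_left hA (sq_nonneg γ)
        nlinarith [h1]
    _ = 4 * γ ^ 2 * L * ↑n * SD + 2 * γ ^ 2 * ‖b‖ ^ 2 := by ring
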